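/- Let A be a finite idempotent algebra and f a binary term operation of A satisfying f(x, f(x,y)) = f(x,y) for all x,y ∈ A. Let a,b ∈ A with f(a,b) ≠ a, and define b_0 = f(a,b) and b_{i+1} = f(a, f(b_i, a)) for i ≥ 0. Then f(a, b_i) = b_i for every i, and there exists an index k and a binary term operation s of A such that s(a, b_k) = s(b_k, a) = b_k. -/
import Mathlib


namespace UA

/-- Terms over a signature `(ι, ar)` with `n` variables. -/
inductive Term (ι : Type) (ar : ι → ℕ) (n : ℕ) : Type where
  | var : Fin n → Term ι ar n
  | app : (i : ι) → (Fin (ar i) → Term ι ar n) → Term ι ar n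

/-- Evaluation of a term in an algebra with operations `ops`. -/
def Term.eval {ι : Type} {ar : ι → ℕ} {A : Type} (ops : ∀ i : ι, (Fin (ar i) → A) → A)
    {n : ℕ} : Term ι ar n → (Fin n → A) → A
  | .var j, x => x j
  | .app i ts, x => ops i fun k => Term.eval ops (ts k) x

variable {ι : Type} {ar : ι → ℕ} {A : Type}

/-- An algebra is idempotent if every basic operation is. -/
def Idempotent (ops : ∀ i : ι, (Fin (ar i) → A) → A) : Prop :=
  ∀ (i : ι) (x : A), ops i (fun _ => x) = x

/-- A subuniverse: a subset closed under all basic operations. -/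
def IsSubuniverse (ops : ∀ i : ι, (Fin (ar i) → A) → A) (S : Set A) : Prop :=
  ∀ (i : ι) (xs : Fin (ar i) → A), (∀ k, xs k ∈ S) → ops i xs ∈ S

/-- The subuniverse generated by `X`. -/
def Sg (ops : ∀ i : ι, (Fin (ar i) → A) → A) (X : Set A) : Set A :=
  ⋂₀ {S | IsSubuniverse ops S ∧ X ⊆ S}

/-- A tolerance: a reflexive symmetric compatible binary relation. -/
def IsTolerance (ops : ∀ i : ι, (Fin (ar i) → A) → A) (τ : A → A → Prop) : Prop :=
  (∀ x, τ x x) ∧ (∀ x y, τ x y → τ y x) ∧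
  ∀ (i : ι) (xs ys : Fin (ar i) → A), (∀ k, τ (xs k) (ys k)) → τ (ops i xs) (ops i ys)

/-- A congruence: a compatible equivalence relation. -/
def IsCongruence (ops : ∀ i : ι, (Fin (ar i) → A) → A) (θ : A → A → Prop) : Prop :=
  Equivalence θ ∧
  ∀ (i : ι) (xs ys : Fin (ar i) → A), (∀ k, θ (xs k) (ys k)) → θ (ops i xs) (ops i ys)

/-- A congruence of the subalgebra with universe `B`, viewed as a partial
equivalence relation on the big algebra whose domain is exactly `B` and which is
compatible with all operations. -/
def IsCongruenceOn (ops : ∀ i : ι, (Fin (ar i) → A) → A) (B : Set A)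
    (θ : A → A → Prop) : Prop :=
  (∀ x y, θ x y → x ∈ B ∧ y ∈ B) ∧
  (∀ x ∈ B, θ x x) ∧
  (∀ x y, θ x y → θ y x) ∧
  (∀ x y z, θ x y → θ y z → θ x z) ∧
  ∀ (i : ι) (xs ys : Fin (ar i) → A), (∀ k, θ (xs k) (ys k)) → θ (ops i xs) (ops i ys)

/-- `f` is a binary term operation of the algebra. -/
def IsTermOp2 (ops : ∀ i : ι, (Fin (ar i) → A) → A) (f : A → A → A) : Prop :=
  ∃ t : Term ι ar 2, ∀ x y, f x y = t.eval ops ![x, y]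

/-- `g` is a ternary term operation of the algebra. -/
def IsTermOp3 (ops : ∀ i : ι, (Fin (ar i) → A) → A) (g : A → A → A → A) : Prop :=
  ∃ t : Term ι ar 3, ∀ x y z, g x y z = t.eval ops ![x, y, z]

/-- Connectivity of `a` and `b` in the hypergraph `H(A)` whose hyperedges are the
nonempty proper subuniverses: a chain of hyperedges with consecutive ones
intersecting, the first containing `a`, the last containing `b`. -/
def HConnected (ops : ∀ i : ι, (Fin (ar i) → A) → A) (a b : A) : Prop :=
  ∃ L : List (Set A),
    (∀ S ∈ L, IsSubuniverse ops S ∧ S.Nonempty ∧ S ≠ Set.univ) ∧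
    L.Chain' (fun S T => (S ∩ T).Nonempty) ∧
    ∃ h : L ≠ [], a ∈ L.head h ∧ b ∈ L.getLast h


/-- Substitution of terms into a term. -/
def Term.subst {ι : Type} {ar : ι → ℕ} {n m : ℕ} :
    Term ι ar n → (Fin n → Term ι ar m) → Term ι ar m
  | .var j, σ => σ j
  | .app i ts, σ => .app i fun k => (ts k).subst σ

lemma Term.eval_subst {ι : Type} {ar : ι → ℕ} {A : Type}
    (ops : ∀ i : ι, (Fin (ar i) → A) → A) {n m : ℕ}
    (t : Term ι ar n) (σ : Fin n → Term ι ar m) (x : Fin m → A) :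
    (t.subst σ).eval ops x = t.eval ops (fun j => (σ j).eval ops x) := by
  induction t with
  | var j => rfl
  | app i ts ih =>
      simp only [Term.subst, Term.eval]
      congr 1
      funext k
      exact ih k

lemma Term.eval_const {ι : Type} {ar : ι → ℕ} {A : Type}
    {ops : ∀ i : ι, (Fin (ar i) → A) → A} (hidem : Idempotent ops)
    {n : ℕ} (t : Term ι ar n) (x : A) :
    t.eval ops (fun _ => x) = x := by
  induction t with
  | var j => rfl
  | app i ts ih =>
      show ops i (fun k => (ts k).eval ops (fun _ => x)) = x
      have : (fun k => (ts k).eval ops (fun _ => x)) = fun _ => x := by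
        funext k; exact ih k
      rw [this]; exact hidem i x

lemma termop2_idem {ι : Type} {ar : ι → ℕ} {A : Type}
    {ops : ∀ i : ι, (Fin (ar i) → A) → A} (hidem : Idempotent ops)
    {f : A → A → A} (hf : IsTermOp2 ops f) (x : A) : f x x = x := by
  obtain ⟨t, ht⟩ := hf
  have : (![x, x] : Fin 2 → A) = fun _ => x := by
    funext j; fin_cases j <;> rfl
  rw [ht, this, Term.eval_const hidem]

lemma termop2_step {ι : Type} {ar : ι → ℕ} {A : Type}
    {ops : ∀ i : ι, (Fin (ar i) → A) → A}
    {f s : A → A → A} (hf : IsTermOp2 ops f) (hs : IsTermOp2 ops s) :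
    IsTermOp2 ops (fun x y => f x (f (s x y) x)) := by
  obtain ⟨tf, htf⟩ := hf
  obtain ⟨ts, hts⟩ := hs
  refine ⟨tf.subst ![Term.var 0, tf.subst ![ts, Term.var 0]], fun x y => ?_⟩
  rw [Term.eval_subst]
  have h1 : (fun j => ((![Term.var 0, tf.subst ![ts, Term.var 0]] :
      Fin 2 → Term ι ar 2) j).eval ops ![x, y]) = ![x, f (s x y) x] := by
    funext j; fin_cases j
    · rfl
    · show (tf.subst ![ts, Term.var 0]).eval ops ![x, y] = f (s x y) x
      rw [Term.eval_subst]
      have h2 : (fun j => ((![ts, Term.var 0] : Fin 2 → Term ι ar 2) j).eval ops ![x, y])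
          = ![s x y, x] := by
        funext j; fin_cases j
        · show ts.eval ops ![x, y] = s x y
          rw [hts]
        · rfl
      rw [h2, ← htf]
  rw [h1, ← htf]

/-- the sequence `b_0 = f(a,b)`, `b_{i+1} = f(a, f(b_i, a))`
satisfies `f(a, b_i) = b_i`, and some `b_k` is a semilattice image of `a`:
there is a binary term operation `s` with `s(a,b_k) = s(b_k,a) = b_k`. -/
theorem stmt_11 {ι : Type} {ar : ι → ℕ} {A : Type} [Fintype A] [Nonempty A]
    (ops : ∀ i : ι, (Fin (ar i) → A) → A)
    (hidem : Idempotent ops)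
    (f : A → A → A) (hf : IsTermOp2 ops f)
    (hlaw : ∀ x y : A, f x (f x y) = f x y)
    (a b : A) (hne : f a b ≠ a)
    (bs : ℕ → A)
    (hbs0 : bs 0 = f a b)
    (hbsS : ∀ i : ℕ, bs (i + 1) = f a (f (bs i) a)) :
    (∀ i : ℕ, f a (bs i) = bs i) ∧
    ∃ (k : ℕ) (s : A → A → A), IsTermOp2 ops s ∧
      s a (bs k) = bs k ∧ s (bs k) a = bs k := by
  have hfix : ∀ i : ℕ, f a (bs i) = bs i := by
    intro i
    cases i with
    | zero => rw [hbs0]; exact hlaw a b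
    | succ n => rw [hbsS]; exact hlaw a (f (bs n) a)
  refine ⟨hfix, ?_⟩
  have hfii : ∀ x : A, f x x = x := termop2_idem hidem hf
  -- eventual periodicity
  obtain ⟨i, j, hij, hbseq⟩ := Finite.exists_ne_map_eq_of_infinite bs
  set k := min i j with hk
  set m := max i j with hm
  have hkm : k < m := by
    rcases lt_or_gt_of_ne hij with h | h
    · simpa [hk, hm, min_eq_left h.le, max_eq_right h.le] using h
    · simpa [hk, hm, min_eq_right h.le, max_eq_left h.le] using h
  have hper : bs k = bs m := by
    rcases le_total i j with h | h
    · simpa [hk, hm, min_eq_left h, max_eq_right h] using hbseq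
    · simpa [hk, hm, min_eq_right h, max_eq_left h] using hbseq.symm
  -- the iterated terms
  set S : ℕ → A → A → A := fun n =>
    Nat.rec (fun x y => f x (f y x)) (fun _ s x y => f x (f (s x y) x)) n with hS
  have hSterm : ∀ n, IsTermOp2 ops (S n) := by
    intro n
    induction n with
    | zero =>
        have : S 0 = fun x y => f x (f ((fun x y : A => y) x y) x) := rfl
        rw [this]
        exact termop2_step hf ⟨Term.var 1, fun x y => rfl⟩
    | succ n ih => exact termop2_step hf ih
  have hSa : ∀ n, S n a (bs k) = bs (k + n + 1) := by
    intro n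
    induction n with
    | zero =>
        show f a (f (bs k) a) = bs (k + 1)
        rw [hbsS k]
    | succ n ih =>
        show f a (f (S n a (bs k)) a) = bs (k + (n + 1) + 1)
        rw [ih, ← hbsS (k + n + 1)]
        ring_nf
  have hSb : ∀ n, S n (bs k) a = bs k := by
    intro n
    induction n with
    | zero =>
        show f (bs k) (f a (bs k)) = bs k
        rw [hfix k, hfii]
    | succ n ih =>
        show f (bs k) (f (S n (bs k) a) (bs k)) = bs k
        rw [ih, hfii, hfii]
  obtain ⟨q, hq⟩ : ∃ q, m = k + q + 1 := ⟨m - k - 1, by omega⟩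
  exact ⟨k, S q, hSterm q, by rw [hSa q, ← hq, ← hper], hSb q⟩

end UA
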